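/- Let φ : Δ^{0̂} → Δ be a group epimorphism and N ≤ Δ a subgroup containing no conjugate of R₀, R₁ or R₂ (no boundary), and suppose R₁, R₂, R₁^{R₀}, R₂^{R₀} ∉ Δ⁺ φ⁻¹. Then N φ⁻¹ contains no conjugate in Δ^{0̂} of R₁, R₂, R₁^{R₀} or R₂^{R₀}. -/

import Mathlib

/-- The relations making each generator an involution. -/
def rels : Set (FreeGroup (Fin 3)) := {x | ∃ i, x = (FreeGroup.of i) ^ 2}

/-- Δ = C₂ * C₂ * C₂. -/
abbrev Δ := PresentedGroup rels

/-- The generators R₀, R₁, R₂ of Δ. -/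
def R (i : Fin 3) : Δ := PresentedGroup.of i

/-- Δ^{0̂}, the normal closure of {R₁, R₂}, an index-2 subgroup of Δ. -/
def Δ0 : Subgroup Δ := Subgroup.normalClosure {R 1, R 2}

/-- Δ⁺, the even-word subgroup of Δ. -/
def Δplus : Subgroup Δ := Subgroup.closure {R 1 * R 2, R 2 * R 0, R 0 * R 1}

/-- The preimage H φ⁻¹, regarded as a subgroup of Δ. -/
def preim (φ : Δ0 →* Δ) (H : Subgroup Δ) : Subgroup Δ :=
  (H.comap φ).map Δ0.subtype

/-- The kernel of φ, regarded as a subgroup of Δ. -/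
def kerS (φ : Δ0 →* Δ) : Subgroup Δ := φ.ker.map Δ0.subtype

/-- The conjugate K^g = g⁻¹ K g. -/
def conjS (K : Subgroup Δ) (g : Δ) : Subgroup Δ :=
  K.map (MulAut.conj g⁻¹).toMonoidHom

/-- The four involutions R₁, R₂, R₁^{R₀}, R₂^{R₀} generating Δ^{0̂}. -/
def gens : Set Δ := {R 1, R 2, (R 0)⁻¹ * R 1 * R 0, (R 0)⁻¹ * R 2 * R 0}

namespace Aux

lemma R_sq (i : Fin 3) : R i * R i = 1 := by
  have h : (PresentedGroup.mk rels) (FreeGroup.of i ^ 2) = 1 :=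
    (QuotientGroup.eq_one_iff _).2 (Subgroup.subset_normalClosure ⟨i, rfl⟩)
  simpa [R, PresentedGroup.of, map_pow, sq] using h

lemma R_inv (i : Fin 3) : (R i)⁻¹ = R i :=
  inv_eq_of_mul_eq_one_right (R_sq i)

abbrev Red := {l : List (Fin 3) // l.Chain' (· ≠ ·)}

def e : Red := ⟨[], List.isChain_nil⟩

def actFun (i : Fin 3) : Red → Red := fun x =>
  match x with
  | ⟨[], _⟩ => ⟨[i], List.isChain_singleton i⟩
  | ⟨a :: t, h⟩ =>
    if hai : a = i then ⟨t, h.tail⟩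
    else ⟨i :: a :: t, List.isChain_cons_cons.2 ⟨fun he => hai he.symm, h⟩⟩

lemma actFun_actFun (i : Fin 3) (x : Red) : actFun i (actFun i x) = x := by
  obtain ⟨l, h⟩ := x
  cases l with
  | nil => simp [actFun]
  | cons a t =>
    by_cases hai : a = i
    · subst hai
      cases t with
      | nil => simp [actFun]
      | cons b t' =>
        have hb : a ≠ b := (List.isChain_cons_cons.1 h).1
        show actFun a (actFun a ⟨a :: b :: t', h⟩) = _
        rw [show actFun a ⟨a :: b :: t', h⟩ = ⟨b :: t', h.tail⟩ from dif_pos rfl]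
        exact dif_neg (Ne.symm hb)
    · show actFun i (actFun i ⟨a :: t, h⟩) = _
      rw [show actFun i ⟨a :: t, h⟩ = ⟨i :: a :: t, List.isChain_cons_cons.2 ⟨Ne.symm hai, h⟩⟩ from
        dif_neg hai]
      exact dif_pos rfl

def perm (i : Fin 3) : Equiv.Perm Red :=
  ⟨actFun i, actFun i, actFun_actFun i, actFun_actFun i⟩

lemma hrels : ∀ r ∈ rels, FreeGroup.lift perm r = 1 := by
  rintro r ⟨i, rfl⟩
  rw [map_pow, FreeGroup.lift_apply_of, sq]
  refine Equiv.ext fun x => ?_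
  rw [Equiv.Perm.mul_apply, Equiv.Perm.one_apply]
  exact actFun_actFun i x

def π : Δ →* Equiv.Perm Red := PresentedGroup.toGroup hrels

lemma π_R (i : Fin 3) : π (R i) = perm i := PresentedGroup.toGroup.of hrels

def W (l : List (Fin 3)) : Δ := (l.map R).prod

@[simp] lemma W_nil : W [] = 1 := rfl
@[simp] lemma W_cons (i : Fin 3) (l : List (Fin 3)) : W (i :: l) = R i * W l := rfl
lemma W_append (l m : List (Fin 3)) : W (l ++ m) = W l * W m := by
  simp [W]

lemma step (i : Fin 3) (m : Red) : W ((perm i) m).1 = R i * W m.1 := by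
  obtain ⟨l, h⟩ := m
  cases l with
  | nil => simp [perm, actFun]
  | cons a t =>
    by_cases hai : a = i
    · subst hai
      show W (actFun a ⟨a :: t, h⟩).1 = _
      rw [show actFun a ⟨a :: t, h⟩ = ⟨t, h.tail⟩ from dif_pos rfl]
      rw [W_cons, ← mul_assoc, R_sq, one_mul]
    · show W (actFun i ⟨a :: t, h⟩).1 = _
      rw [show actFun i ⟨a :: t, h⟩ = ⟨i :: a :: t, List.isChain_cons_cons.2 ⟨Ne.symm hai, h⟩⟩ from
        dif_neg hai]
      rw [W_cons]

def QS : Subgroup Δ where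
  carrier := {x | ∀ m : Red, W ((π x) m).1 = x * W m.1}
  one_mem' := by intro m; simp
  mul_mem' := by
    intro x y hx hy m
    rw [map_mul, Equiv.Perm.mul_apply, hx, hy, mul_assoc]
  inv_mem' := by
    intro x hx m
    have h := hx ((π x⁻¹) m)
    rw [map_inv] at h ⊢
    rw [show (π x) ((π x)⁻¹ m) = m from Equiv.apply_symm_apply _ m] at h
    rw [h, ← mul_assoc, inv_mul_cancel, one_mul]

lemma mem_QS (x : Δ) : x ∈ QS := by
  refine PresentedGroup.generated_by rels QS (fun j => ?_) x
  intro m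
  show W ((π (R j)) m).1 = R j * W m.1
  rw [π_R]
  exact step j m

lemma norm (x : Δ) : W ((π x) e).1 = x := by
  have h := mem_QS x e
  rw [show W (e.1) = 1 from rfl, mul_one] at h
  exact h

lemma inj (l : List (Fin 3)) (h : l.Chain' (· ≠ ·)) : (π (W l)) e = ⟨l, h⟩ := by
  induction l with
  | nil => rw [W_nil, map_one]; rfl
  | cons i t ih =>
    rw [W_cons, map_mul, Equiv.Perm.mul_apply, ih h.tail, π_R]
    show actFun i ⟨t, h.tail⟩ = _
    cases t with
    | nil => rfl
    | cons a t' =>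
      have hia : i ≠ a := (List.isChain_cons_cons.1 h).1
      exact dif_neg (Ne.symm hia)

lemma W_eq_one {l : List (Fin 3)} (h : l.Chain' (· ≠ ·)) (h1 : W l = 1) : l = [] := by
  have := inj l h
  rw [h1, map_one] at this
  exact (congrArg Subtype.val this.symm)

lemma torsion_aux : ∀ n (l : List (Fin 3)), l.length ≤ n → l.Chain' (· ≠ ·) → l ≠ [] →
    W l * W l = 1 → ∃ i g, W l = g⁻¹ * R i * g := by
  intro n
  induction n with
  | zero =>
    intro l hl _ hne _
    exact absurd (List.length_eq_zero_iff.1 (Nat.le_zero.1 hl)) hne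
  | succ n ih =>
    intro l hlen hch hne hsq
    obtain ⟨a, t, rfl⟩ := List.exists_cons_of_ne_nil hne
    cases t with
    | nil => exact ⟨a, 1, by simp⟩
    | cons b t' =>
      set t := b :: t' with ht
      have htne : t ≠ [] := by simp [ht]
      by_cases hba : (a :: t).getLast (List.cons_ne_nil a t) = a
      · -- l = a :: m ++ [a]
        have hgl : t.getLast htne = a := by
          rwa [List.getLast_cons htne] at hba
        have hmt : t.dropLast ++ [a] = t := by
          rw [← hgl]; exact List.dropLast_append_getLast htne
        set m := t.dropLast with hm
        have hchm : m.Chain' (· ≠ ·) := by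
          have h1 : (m ++ [a]).Chain' (· ≠ ·) := by rw [hmt]; exact hch.tail
          exact (List.isChain_append.1 h1).1
        have hmne : m ≠ [] := by
          intro h0
          rw [h0] at hmt
          simp at hmt
          have : a ≠ a := by
            have := hch
            rw [← hmt] at this
            exact (List.isChain_cons_cons.1 this).1
          exact this rfl
        have hWl : W (a :: t) = R a * W m * R a := by
          rw [← hmt, W_cons, W_append]
          simp [mul_assoc]
        have hx : R a * (W m * W m) * R a = 1 := by
          rw [← hsq, hWl]
          rw [show W m * W m = W m * (R a * R a) * W m from by rw [R_sq, mul_one]]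
          group
        have h2 : W m * W m = 1 := by
          have h3 : W m * W m = (R a)⁻¹ * (R a * (W m * W m) * R a) * (R a)⁻¹ := by group
          rw [hx, R_inv] at h3
          rw [h3, mul_one, R_sq]
        have hlm : m.length ≤ n := by
          have h4 : (a :: t).length = m.length + 2 := by
            rw [← hmt]; simp
          omega
        obtain ⟨i, g, hig⟩ := ih m hlm hchm hmne h2
        refine ⟨i, g * R a, ?_⟩
        rw [hWl, hig, mul_inv_rev, R_inv]
        group
      · -- l ++ l is reduced and nontrivial, contradiction
        exfalso
        have hchll : ((a :: t) ++ (a :: t)).Chain' (· ≠ ·) := by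
          apply List.isChain_append.2
          refine ⟨hch, hch, ?_⟩
          intro x hx y hy
          rw [List.getLast?_eq_getLast (List.cons_ne_nil a t)] at hx
          rw [List.head?_cons] at hy
          obtain rfl : (a :: t).getLast (List.cons_ne_nil a t) = x := Option.mem_some_iff.1 hx
          obtain rfl : a = y := Option.mem_some_iff.1 hy
          exact hba
        have : (a :: t) ++ (a :: t) = [] := by
          apply W_eq_one hchll
          rw [W_append, hsq]
        simp at this

lemma order_two (w : Δ) (hw : w * w = 1) (hne : w ≠ 1) : ∃ i g, w = g⁻¹ * R i * g := by
  have hnorm := norm w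
  have hch := ((π w) e).2
  have hlne : ((π w) e).1 ≠ [] := by
    intro h0
    exact hne (by rw [← hnorm, h0, W_nil])
  obtain ⟨i, g, h⟩ := torsion_aux ((π w) e).1.length _ le_rfl hch hlne
    (by rw [hnorm]; exact hw)
  exact ⟨i, g, by rw [← hnorm, h]⟩

end Aux

theorem stmt15 (φ : Δ0 →* Δ) (hφ : Function.Surjective φ)
    (N : Subgroup Δ) (hN : ∀ i : Fin 3, ∀ c : Δ, c⁻¹ * R i * c ∉ N)
    (hgens : ∀ s ∈ gens, s ∉ preim φ Δplus) :
    ∀ s ∈ gens, ∀ c ∈ Δ0, c⁻¹ * s * c ∉ preim φ N := by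
  intro s hs c hc hmem
  have h1 : R 1 ∈ Δ0 := Subgroup.subset_normalClosure (by left; rfl)
  have h2 : R 2 ∈ Δ0 := Subgroup.subset_normalClosure (by right; rfl)
  have hnormal : Δ0.Normal := Subgroup.normalClosure_normal
  have hs0 : s ∈ Δ0 := by
    have h := hs
    simp only [gens, Set.mem_insert_iff, Set.mem_singleton_iff] at h
    rcases h with rfl | rfl | rfl | rfl
    · exact h1
    · exact h2
    · simpa [inv_inv] using hnormal.conj_mem _ h1 (R 0)⁻¹
    · simpa [inv_inv] using hnormal.conj_mem _ h2 (R 0)⁻¹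
  have key : ∀ x y : Δ, y * y = 1 → (x⁻¹ * y * x) * (x⁻¹ * y * x) = 1 := by
    intro x y h
    rw [show (x⁻¹ * y * x) * (x⁻¹ * y * x) = x⁻¹ * (y * y) * x from by group, h]
    group
  have hss : s * s = 1 := by
    have h := hs
    simp only [gens, Set.mem_insert_iff, Set.mem_singleton_iff] at h
    rcases h with rfl | rfl | rfl | rfl
    · exact Aux.R_sq 1
    · exact Aux.R_sq 2
    · exact key _ _ (Aux.R_sq 1)
    · exact key _ _ (Aux.R_sq 2)
  simp only [preim, Subgroup.mem_map] at hmem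
  obtain ⟨y, hyN, hyval⟩ := hmem
  set S : Δ0 := ⟨s, hs0⟩ with hS
  set C : Δ0 := ⟨c, hc⟩ with hC
  have hyS : y = C⁻¹ * S * C := Subtype.ext hyval
  have ht1 : φ S ≠ 1 := by
    intro h
    refine hgens s hs ?_
    simp only [preim, Subgroup.mem_map]
    exact ⟨S, Subgroup.mem_comap.2 (by rw [h]; exact one_mem _), rfl⟩
  have hφy : φ y = (φ C)⁻¹ * φ S * φ C := by rw [hyS, map_mul, map_mul, map_inv]
  have hyne : φ y ≠ 1 := by
    rw [hφy]
    intro h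
    apply ht1
    have h2 : φ S = (φ C) * ((φ C)⁻¹ * φ S * φ C) * (φ C)⁻¹ := by group
    rw [h, mul_one] at h2
    simpa using h2
  have hSsq : φ S * φ S = 1 := by
    rw [← map_mul]
    have hSS : S * S = 1 := Subtype.ext (by simpa using hss)
    rw [hSS, map_one]
  have hsq : φ y * φ y = 1 := by
    rw [hφy]
    exact key _ _ hSsq
  obtain ⟨i, g, hig⟩ := Aux.order_two (φ y) hsq hyne
  exact hN i g (hig ▸ Subgroup.mem_comap.1 hyN)
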